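/- Fix a real parameter c and natural numbers l and ν with ν ≥ 1. For every real x > 0, the derivative of the complementary polynomial of the confluent hypergeometric equation satisfies (d/dx)𝒫_ν(x,l) = −ν·𝒫_{ν−1}(x,l). -/

import Mathlib

open Real Set Filter
open scoped ContDiff

variable (c : ℝ) (l : ℕ)

private noncomputable def F (c : ℝ) (l : ℕ) : ℝ → ℝ := fun t : ℝ => t ^ (c - 1 + (l : ℝ)) * Real.exp (-t)

private lemma smoothF : ContDiffOn ℝ ∞ (F c l) (Ioi 0) := fun x hx =>
  (((Real.contDiffAt_rpow_const_of_ne (ne_of_gt hx)).mul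
    ((Real.contDiff_exp.comp contDiff_neg).contDiffAt)).contDiffWithinAt)

private lemma smoothIter (n : ℕ) : ContDiffOn ℝ ∞ (iteratedDeriv n (F c l)) (Ioi 0) := by
  induction n with
  | zero => simpa [iteratedDeriv_zero] using smoothF c l
  | succ n ih =>
    rw [iteratedDeriv_succ]
    exact ((contDiffOn_infty_iff_deriv_of_isOpen isOpen_Ioi).1 ih).2

private lemma hasDerivIter (n : ℕ) {x : ℝ} (hx : 0 < x) :
    HasDerivAt (iteratedDeriv n (F c l)) (iteratedDeriv (n + 1) (F c l) x) x := by
  have h : DifferentiableAt ℝ (iteratedDeriv n (F c l)) x :=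
    ((smoothIter c l n).differentiableOn (by simp)).differentiableAt
      (isOpen_Ioi.mem_nhds hx)
  simpa [iteratedDeriv_succ] using h.hasDerivAt

private lemma ode {x : ℝ} (hx : 0 < x) :
    x * iteratedDeriv 1 (F c l) x
      = (c - 1 + (l : ℝ) - x) * iteratedDeriv 0 (F c l) x := by
  have h1 : HasDerivAt (fun t : ℝ => t ^ (c - 1 + (l : ℝ)))
      ((c - 1 + (l : ℝ)) * x ^ (c - 1 + (l : ℝ) - 1)) x :=
    Real.hasDerivAt_rpow_const (Or.inl hx.ne')
  have h2 : HasDerivAt (fun t : ℝ => Real.exp (-t)) (-Real.exp (-x)) x := by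
    simpa [Function.comp_def] using (Real.hasDerivAt_exp (-x)).comp x (hasDerivAt_neg x)
  have h := h1.mul h2
  rw [iteratedDeriv_one, iteratedDeriv_zero]
  have hd : deriv (F c l) x = (c - 1 + (l : ℝ)) * x ^ (c - 1 + (l : ℝ) - 1) * Real.exp (-x)
      + x ^ (c - 1 + (l : ℝ)) * -Real.exp (-x) := h.deriv
  rw [hd]
  have hxp : x ^ (c - 1 + (l : ℝ) - 1) * x = x ^ (c - 1 + (l : ℝ)) := by
    rw [← Real.rpow_add_one hx.ne']
    congr 1
    ring
  show _ = _ * (x ^ (c - 1 + (l : ℝ)) * Real.exp (-x))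
  rw [← hxp]; ring

private lemma rec3 : ∀ n : ℕ, ∀ x : ℝ, 0 < x →
    x * iteratedDeriv (n + 1) (F c l) x
      = (c - 1 + (l : ℝ) - x - n) * iteratedDeriv n (F c l) x
        - (n : ℝ) * iteratedDeriv (n - 1) (F c l) x := by
  intro n
  induction n with
  | zero => intro x hx; simpa using ode c l hx
  | succ n ih =>
    intro x hx
    have hev : (fun y => y * iteratedDeriv (n + 1) (F c l) y)
        =ᶠ[nhds x] (fun y => (c - 1 + (l : ℝ) - y - n) * iteratedDeriv n (F c l) y
          - (n : ℝ) * iteratedDeriv (n - 1) (F c l) y) :=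
      (eventually_gt_nhds hx).mono fun y hy => ih y hy
    have hL : HasDerivAt (fun y => y * iteratedDeriv (n + 1) (F c l) y)
        (1 * iteratedDeriv (n + 1) (F c l) x + x * iteratedDeriv (n + 2) (F c l) x) x :=
      (hasDerivAt_id x).mul (hasDerivIter c l (n + 1) hx)
    have hA : HasDerivAt (fun y : ℝ => c - 1 + (l : ℝ) - y - (n : ℝ)) (-1) x := by
      simpa using (((hasDerivAt_id x).const_sub (c - 1 + (l : ℝ))).sub_const (n : ℝ)).neg.neg
    have hR : HasDerivAt (fun y => (c - 1 + (l : ℝ) - y - n) * iteratedDeriv n (F c l) y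
          - (n : ℝ) * iteratedDeriv (n - 1) (F c l) y)
        ((-1) * iteratedDeriv n (F c l) x
          + (c - 1 + (l : ℝ) - x - n) * iteratedDeriv (n + 1) (F c l) x
          - (n : ℝ) * iteratedDeriv (n - 1 + 1) (F c l) x) x :=
      (hA.mul (hasDerivIter c l n hx)).sub ((hasDerivIter c l (n - 1) hx).const_mul (n : ℝ))
    have heq : 1 * iteratedDeriv (n + 1) (F c l) x + x * iteratedDeriv (n + 2) (F c l) x
        = (-1) * iteratedDeriv n (F c l) x
          + (c - 1 + (l : ℝ) - x - n) * iteratedDeriv (n + 1) (F c l) x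
          - (n : ℝ) * iteratedDeriv (n - 1 + 1) (F c l) x := by
      rw [← hL.deriv, ← hR.deriv]
      exact hev.deriv_eq
    have hcast : (n : ℝ) * iteratedDeriv (n - 1 + 1) (F c l) x
        = (n : ℝ) * iteratedDeriv n (F c l) x := by
      cases n with
      | zero => simp
      | succ k => norm_num
    rw [hcast] at heq
    simp only [Nat.add_sub_cancel]
    push_cast at heq ⊢
    linarith [heq]

/-- Complementary polynomial of the confluent hypergeometric equation:
`𝒫_ν(x,l) = x^(1-c+ν-l) · e^x · (dᵛ/dtᵛ)(t^(c-1+l) e^(-t)) |_{t=x}` (rpow powers). -/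
noncomputable def complConfluent (c : ℝ) (l ν : ℕ) (x : ℝ) : ℝ :=
  x ^ (1 - c + (ν : ℝ) - (l : ℝ)) * Real.exp x *
    iteratedDeriv ν (fun t : ℝ => t ^ (c - 1 + (l : ℝ)) * Real.exp (-t)) x

theorem complConfluent_deriv (c : ℝ) (l ν : ℕ) (hν : 1 ≤ ν) (x : ℝ) (hx : 0 < x) :
    deriv (fun t => complConfluent c l ν t) x
      = -(ν : ℝ) * complConfluent c l (ν - 1) x := by
  obtain ⟨m, rfl⟩ : ∃ m, ν = m + 1 := ⟨ν - 1, by omega⟩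
  set a : ℝ := 1 - c + ((m + 1 : ℕ) : ℝ) - (l : ℝ) with ha
  have h1 : HasDerivAt (fun t : ℝ => t ^ a) (a * x ^ (a - 1)) x :=
    Real.hasDerivAt_rpow_const (Or.inl hx.ne')
  have h2 : HasDerivAt Real.exp (Real.exp x) x := Real.hasDerivAt_exp x
  have h3 := hasDerivIter c l (m + 1) hx
  have H := (h1.mul h2).mul h3
  have hD : deriv (fun t => complConfluent c l (m + 1) t) x
      = (a * x ^ (a - 1) * Real.exp x + x ^ a * Real.exp x)
          * iteratedDeriv (m + 1) (F c l) x
        + x ^ a * Real.exp x * iteratedDeriv (m + 1 + 1) (F c l) x := by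
    simp only [complConfluent]
    exact H.deriv
  rw [hD]
  have key := rec3 c l (m + 1) x hx
  simp only [Nat.add_sub_cancel] at key
  have hxa : x ^ a = x ^ (a - 1) * x := by
    rw [← Real.rpow_add_one hx.ne']
    congr 1
    ring
  have hcc : complConfluent c l (m + 1 - 1) x
      = x ^ (a - 1) * Real.exp x * iteratedDeriv m (F c l) x := by
    simp only [complConfluent, Nat.add_sub_cancel]
    congr 2
    · congr 1
      push_cast [ha]
      ring
  rw [hcc, hxa]
  push_cast [ha] at key ⊢
  linear_combination (x ^ (1 - c + ((m : ℝ) + 1) - (l : ℝ) - 1) * Real.exp x) * key
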